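/- For every prime p > 3 and every pair (A,B) ∈ 𝔽_p² with B(A² − 4) ≠ 0, the number of 𝔽_p-rational points of the Montgomery curve M_{A,B} (including the point at infinity) is divisible by 4. -/

import Mathlib

/-- The affine `𝔽_p`-points of the Montgomery curve `B * y ^ 2 = x ^ 3 + A * x ^ 2 + x`. -/
def montAffinePoints (p : ℕ) [Fact p.Prime] (A B : ZMod p) : Finset (ZMod p × ZMod p) :=
  Finset.univ.filter (fun q => B * q.2 ^ 2 = q.1 ^ 3 + A * q.1 ^ 2 + q.1)

/-- The number of `𝔽_p`-rational points of the Montgomery curve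
`M_{A,B} : B * y ^ 2 = x ^ 3 + A * x ^ 2 + x`, including the point at infinity. -/
def montCard (p : ℕ) [Fact p.Prime] (A B : ZMod p) : ℕ :=
  (montAffinePoints p A B).card + 1

/-- The set `S_M(p, t)` of pairs `(A, B) ∈ 𝔽_p²` with `B * (A ^ 2 - 4) ≠ 0` such that the
Montgomery curve `M_{A,B}` has exactly `p + 1 - t` points over `𝔽_p`. -/
def SM (p : ℕ) [Fact p.Prime] (t : ℤ) : Finset (ZMod p × ZMod p) :=
  Finset.univ.filter
    (fun q => q.2 * (q.1 ^ 2 - 4) ≠ 0 ∧ (montCard p q.1 q.2 : ℤ) = (p : ℤ) + 1 - t)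


section aux
variable {p : ℕ} [Fact p.Prime]

/-- number of y with B y^2 = c -/
private def Ncard (p : ℕ) [Fact p.Prime] (B c : ZMod p) : ℕ :=
  (Finset.univ.filter (fun y : ZMod p => B * y ^ 2 = c)).card

private lemma card_sq_eq (hp2 : (2 : ZMod p) ≠ 0) {d : ZMod p} (hd : d ≠ 0) :
    (Finset.univ.filter (fun z : ZMod p => z ^ 2 = d)).card
      = if IsSquare d then 2 else 0 := by
  split_ifs with h
  · obtain ⟨u, rfl⟩ := h
    have hu : u ≠ 0 := by rintro rfl; simp at hd
    have hset : Finset.univ.filter (fun z : ZMod p => z ^ 2 = u * u) = {u, -u} := by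
      ext z
      simp only [Finset.mem_filter, Finset.mem_univ, true_and, Finset.mem_insert,
        Finset.mem_singleton]
      constructor
      · intro hz
        have : (z - u) * (z + u) = 0 := by linear_combination hz
        rcases mul_eq_zero.mp this with h1 | h1
        · exact Or.inl (by linear_combination h1)
        · exact Or.inr (by linear_combination h1)
      · rintro (rfl | rfl) <;> ring
    rw [hset, Finset.card_insert_of_notMem, Finset.card_singleton]
    simp only [Finset.mem_singleton]
    intro he
    have h2 : (2 : ZMod p) * u = 0 := by linear_combination he
    exact hu ((mul_eq_zero.mp h2).resolve_left hp2)
  · rw [Finset.card_eq_zero, Finset.filter_eq_empty_iff]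
    intro z _
    exact fun hz => h ⟨z, by linear_combination -hz⟩

private lemma Ncard_zero {B : ZMod p} (hB : B ≠ 0) : Ncard p B 0 = 1 := by
  have : Finset.univ.filter (fun y : ZMod p => B * y ^ 2 = 0) = {0} := by
    ext y
    simp only [Finset.mem_filter, Finset.mem_univ, true_and, Finset.mem_singleton]
    constructor
    · intro hy
      rcases mul_eq_zero.mp hy with h | h
      · exact absurd h hB
      · exact pow_eq_zero_iff (by norm_num) |>.mp h
    · rintro rfl; ring
  rw [Ncard, this, Finset.card_singleton]

private lemma Ncard_eq (hp2 : (2 : ZMod p) ≠ 0) {B c : ZMod p} (hB : B ≠ 0) (hc : c ≠ 0) :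
    Ncard p B c = if IsSquare (B * c) then 2 else 0 := by
  rw [← card_sq_eq hp2 (mul_ne_zero hB hc)]
  exact Finset.card_nbij' (fun y => B * y) (fun z => B⁻¹ * z)
    (fun y hy => by
      simp only [Finset.mem_coe, Finset.mem_filter, Finset.mem_univ, true_and] at hy ⊢
      linear_combination B * hy)
    (fun z hz => by
      simp only [Finset.mem_coe, Finset.mem_filter, Finset.mem_univ, true_and] at hz ⊢
      field_simp
      linear_combination hz)
    (fun y _ => by field_simp)
    (fun z _ => by field_simp)

private lemma Ncard_mul_sq {B c t : ZMod p} (ht : t ≠ 0) :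
    Ncard p B (c * t ^ 2) = Ncard p B c := by
  exact Finset.card_nbij' (fun y => t⁻¹ * y) (fun y => t * y)
    (fun y hy => by
      simp only [Finset.mem_coe, Finset.mem_filter, Finset.mem_univ, true_and] at hy ⊢
      field_simp
      linear_combination hy)
    (fun y hy => by
      simp only [Finset.mem_coe, Finset.mem_filter, Finset.mem_univ, true_and] at hy ⊢
      linear_combination t ^ 2 * hy)
    (fun y _ => by field_simp)
    (fun y _ => by field_simp)

private lemma card_filter_prod (P : ZMod p × ZMod p → Prop) [DecidablePred P] :
    (Finset.univ.filter P).card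
      = ∑ x : ZMod p, (Finset.univ.filter fun y => P (x, y)).card := by
  rw [Finset.card_filter, Fintype.sum_prod_type]
  exact Finset.sum_congr rfl fun x _ => (Finset.card_filter _ _).symm

end aux

/-- For a prime `p > 3` and `(A, B) ∈ 𝔽_p²` with `B (A² - 4) ≠ 0`, the number of
`𝔽_p`-rational points of the Montgomery curve `M_{A,B}` (including the point at
infinity) is divisible by `4`. -/
theorem four_dvd_montCard (p : ℕ) [Fact p.Prime] (hp3 : 3 < p) (A B : ZMod p)
    (h : B * (A ^ 2 - 4) ≠ 0) : 4 ∣ montCard p A B := by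
  have hp : p.Prime := Fact.out
  have hp2 : (2 : ZMod p) ≠ 0 := by
    intro h2
    have h2' : ((2 : ℕ) : ZMod p) = 0 := by exact_mod_cast h2
    rw [ZMod.natCast_eq_zero_iff] at h2'
    have := Nat.le_of_dvd (by norm_num) h2'
    omega
  have hB : B ≠ 0 := left_ne_zero_of_mul h
  have hA4 : A ^ 2 - 4 ≠ 0 := right_ne_zero_of_mul h
  have hAp2 : A + 2 ≠ 0 := fun hh => hA4 (by linear_combination (A - 2) * hh)
  have hAm2 : A - 2 ≠ 0 := fun hh => hA4 (by linear_combination (A + 2) * hh)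
  have h01 : (0 : ZMod p) ≠ 1 := fun hh => one_ne_zero hh.symm
  have h1m1 : (1 : ZMod p) ≠ -1 := fun hh => hp2 (by linear_combination hh)
  have h0m1 : (0 : ZMod p) ≠ -1 := by
    intro hh
    exact one_ne_zero (α := ZMod p) (by linear_combination hh)
  set f : ZMod p → ZMod p := fun x => x ^ 3 + A * x ^ 2 + x with hf
  have hdec : (montAffinePoints p A B).card = ∑ x : ZMod p, Ncard p B (f x) :=
    card_filter_prod _
  set T : Finset (ZMod p) := Finset.univ \ {0, 1, -1} with hT
  have hmemT : ∀ x : ZMod p, x ∈ T ↔ x ≠ 0 ∧ x ≠ 1 ∧ x ≠ -1 := by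
    intro x; simp [hT, not_or]
  have hsplit : ∑ x : ZMod p, Ncard p B (f x)
      = ∑ x ∈ T, Ncard p B (f x) + (1 + Ncard p B (A + 2) + Ncard p B (A - 2)) := by
    rw [← Finset.sum_sdiff (Finset.subset_univ ({0, 1, -1} : Finset (ZMod p)))]
    congr 1
    have e0 : f 0 = 0 := by simp [hf]
    have e1 : f 1 = A + 2 := by simp only [hf]; ring
    have em1 : f (-1) = A - 2 := by simp only [hf]; ring
    rw [Finset.sum_insert (by simp [h01, h0m1]), Finset.sum_insert (by simp [h1m1]),
      Finset.sum_singleton, e0, e1, em1, Ncard_zero hB]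
    ring
  have hTsplit : ∑ x ∈ T, Ncard p B (f x)
      = ∑ x ∈ T.filter (fun x => x ^ 2 + A * x + 1 = 0), Ncard p B (f x)
        + ∑ x ∈ T.filter (fun x => ¬(x ^ 2 + A * x + 1 = 0)), Ncard p B (f x) :=
    (Finset.sum_filter_add_sum_filter_not T _ _).symm
  -- Part A : the roots of x^2 + A x + 1
  have hroots : T.filter (fun x => x ^ 2 + A * x + 1 = 0)
      = Finset.univ.filter (fun x : ZMod p => x ^ 2 + A * x + 1 = 0) := by
    ext x
    simp only [Finset.mem_filter, hmemT, Finset.mem_univ, true_and]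
    constructor
    · tauto
    · intro hx
      refine ⟨⟨?_, ?_, ?_⟩, hx⟩
      · rintro rfl
        exact one_ne_zero (α := ZMod p) (by linear_combination hx)
      · rintro rfl
        exact hAp2 (by linear_combination hx)
      · rintro rfl
        exact hAm2 (by linear_combination -hx)
  have hR : (Finset.univ.filter (fun x : ZMod p => x ^ 2 + A * x + 1 = 0)).card
      = if IsSquare (A ^ 2 - 4) then 2 else 0 := by
    rw [← card_sq_eq hp2 hA4]
    exact Finset.card_nbij' (fun x => 2 * x + A) (fun z => (z - A) / 2)
      (fun x hx => by
        simp only [Finset.mem_coe, Finset.mem_filter, Finset.mem_univ, true_and] at hx ⊢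
        linear_combination 4 * hx)
      (fun z hz => by
        simp only [Finset.mem_coe, Finset.mem_filter, Finset.mem_univ, true_and] at hz ⊢
        field_simp
        linear_combination hz)
      (fun x _ => by field_simp; ring)
      (fun z _ => by field_simp; ring)
  have hApart : ∑ x ∈ T.filter (fun x => x ^ 2 + A * x + 1 = 0),
        ((Ncard p B (f x) : ℕ) : ZMod 4)
      = if IsSquare (A ^ 2 - 4) then 2 else 0 := by
    rw [hroots]
    have hone : ∀ x ∈ Finset.univ.filter (fun x : ZMod p => x ^ 2 + A * x + 1 = 0),
        ((Ncard p B (f x) : ℕ) : ZMod 4) = 1 := by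
      intro x hx
      simp only [Finset.mem_filter] at hx
      have hfx : f x = 0 := by simp only [hf]; linear_combination x * hx.2
      rw [hfx, Ncard_zero hB, Nat.cast_one]
    rw [Finset.sum_congr rfl hone, Finset.sum_const, nsmul_eq_mul, mul_one, hR]
    split <;> rfl
  -- Part B : the x ↦ x⁻¹ involution kills the rest mod 4
  have hBpart : ∑ x ∈ T.filter (fun x => ¬(x ^ 2 + A * x + 1 = 0)),
        ((Ncard p B (f x) : ℕ) : ZMod 4) = 0 := by
    refine Finset.sum_involution (fun x _ => x⁻¹) ?_ ?_ ?_ ?_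
    · intro x hx
      simp only [Finset.mem_filter, hmemT] at hx
      obtain ⟨⟨hx0, hx1, hxm1⟩, hg⟩ := hx
      have hfinv : f x⁻¹ = f x * (x⁻¹ ^ 2) ^ 2 := by
        simp only [hf]; field_simp; ring
      rw [hfinv, Ncard_mul_sq (pow_ne_zero 2 (inv_ne_zero hx0))]
      have hfx : f x ≠ 0 := by
        simp only [hf]
        intro hc
        exact (mul_ne_zero hx0 hg) (by linear_combination hc)
      rw [Ncard_eq hp2 hB hfx]
      split <;> decide
    · intro x hx _
      show x⁻¹ ≠ x
      simp only [Finset.mem_filter, hmemT] at hx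
      obtain ⟨⟨hx0, hx1, hxm1⟩, _⟩ := hx
      intro heq
      have hsq : x * x = 1 := by nth_rewrite 1 [← heq]; exact inv_mul_cancel₀ hx0
      have : (x - 1) * (x + 1) = 0 := by linear_combination hsq
      rcases mul_eq_zero.mp this with h1 | h1
      · exact hx1 (by linear_combination h1)
      · exact hxm1 (by linear_combination h1)
    · intro x hx
      simp only [Finset.mem_filter, hmemT] at hx
      obtain ⟨⟨hx0, hx1, hxm1⟩, hg⟩ := hx
      refine Finset.mem_filter.mpr ⟨(hmemT _).mpr ⟨inv_ne_zero hx0, ?_, ?_⟩, ?_⟩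
      · intro hh
        have hh' : x⁻¹ = 1 := hh
        exact hx1 (by rw [← inv_inv x, hh', inv_one])
      · intro hh
        have hh' : x⁻¹ = -1 := hh
        apply hxm1
        rw [← inv_inv x, hh', inv_neg, inv_one]
      · show ¬((x⁻¹) ^ 2 + A * x⁻¹ + 1 = 0)
        intro hc
        apply hg
        have hxx : x ^ 2 + A * x + 1 = x ^ 2 * ((x⁻¹) ^ 2 + A * x⁻¹ + 1) := by
          field_simp; ring
        rw [hxx, hc, mul_zero]
    · intro x _
      exact inv_inv x
  -- quadratic character bookkeeping
  have hBa : B * (A + 2) ≠ 0 := mul_ne_zero hB hAp2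
  have hBb : B * (A - 2) ≠ 0 := mul_ne_zero hB hAm2
  have hchi : quadraticChar (ZMod p) (A ^ 2 - 4)
      = quadraticChar (ZMod p) (B * (A + 2)) * quadraticChar (ZMod p) (B * (A - 2)) := by
    rw [← map_mul]
    have he : (B * (A + 2)) * (B * (A - 2)) = (B * B) * (A ^ 2 - 4) := by ring
    rw [he, map_mul, map_mul]
    have : quadraticChar (ZMod p) B * quadraticChar (ZMod p) B = 1 := by
      rcases quadraticChar_dichotomy hB with hq | hq <;> rw [hq] <;> norm_num
    rw [this, one_mul]
  have hn1 : Ncard p B (A + 2) = if IsSquare (B * (A + 2)) then 2 else 0 :=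
    Ncard_eq hp2 hB hAp2
  have hn2 : Ncard p B (A - 2) = if IsSquare (B * (A - 2)) then 2 else 0 :=
    Ncard_eq hp2 hB hAm2
  -- final assembly in ZMod 4
  have hfinal : ((montCard p A B : ℕ) : ZMod 4) = 0 := by
    rw [montCard, hdec, hsplit, hTsplit]
    push_cast
    rw [hApart, hBpart, hn1, hn2]
    have hd1 := quadraticChar_dichotomy hBa
    have hd2 := quadraticChar_dichotomy hBb
    have hiff1 := quadraticChar_one_iff_isSquare hBa
    have hiff2 := quadraticChar_one_iff_isSquare hBb
    have hiff3 := quadraticChar_one_iff_isSquare hA4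
    rcases hd1 with hq1 | hq1 <;> rcases hd2 with hq2 | hq2
    · have hs1 : IsSquare (B * (A + 2)) := hiff1.mp hq1
      have hs2 : IsSquare (B * (A - 2)) := hiff2.mp hq2
      have hs3 : IsSquare (A ^ 2 - 4) := hiff3.mp (by rw [hchi, hq1, hq2]; norm_num)
      simp only [if_pos hs1, if_pos hs2, if_pos hs3]
      decide
    · have hs1 : IsSquare (B * (A + 2)) := hiff1.mp hq1
      have hs2 : ¬IsSquare (B * (A - 2)) := by
        rw [← hiff2, hq2]; norm_num
      have hs3 : ¬IsSquare (A ^ 2 - 4) := by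
        rw [← hiff3, hchi, hq1, hq2]; norm_num
      simp only [if_pos hs1, if_neg hs2, if_neg hs3]
      decide
    · have hs1 : ¬IsSquare (B * (A + 2)) := by
        rw [← hiff1, hq1]; norm_num
      have hs2 : IsSquare (B * (A - 2)) := hiff2.mp hq2
      have hs3 : ¬IsSquare (A ^ 2 - 4) := by
        rw [← hiff3, hchi, hq1, hq2]; norm_num
      simp only [if_neg hs1, if_pos hs2, if_neg hs3]
      decide
    · have hs1 : ¬IsSquare (B * (A + 2)) := by
        rw [← hiff1, hq1]; norm_num
      have hs2 : ¬IsSquare (B * (A - 2)) := by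
        rw [← hiff2, hq2]; norm_num
      have hs3 : IsSquare (A ^ 2 - 4) := hiff3.mp (by rw [hchi, hq1, hq2]; norm_num)
      simp only [if_neg hs1, if_neg hs2, if_pos hs3]
      decide
  exact (ZMod.natCast_eq_zero_iff (montCard p A B) 4).mp hfinal
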